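/- Every ground type of IMLL₂ is an erasable type: for every ground type A there exists a linear λ-term E_A of type A ⊸ 1 such that E_A V →βη* I for every value V of type A. -/

import Mathlib

/-!
Core development: untyped λ-terms in de Bruijn representation, linearity,
β- and η-reduction, as in the paper "A type-assignment of linear erasure
and duplication" (Curzi, Roversi).
-/

namespace LEMPaper

/-- Untyped λ-terms, de Bruijn representation. -/
inductive Lam : Type
  | var : ℕ → Lam
  | app : Lam → Lam → Lam
  | lam : Lam → Lam
  deriving DecidableEq

namespace Lam

/-- Lift a renaming under a binder. -/
def liftRen (ρ : ℕ → ℕ) : ℕ → ℕ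
  | 0 => 0
  | n + 1 => ρ n + 1

/-- Apply a renaming of free variables. -/
def rename (ρ : ℕ → ℕ) : Lam → Lam
  | var n => var (ρ n)
  | app M N => app (M.rename ρ) (N.rename ρ)
  | lam M => lam (M.rename (liftRen ρ))

/-- Shift all free variables up by one. -/
def shift (M : Lam) : Lam := M.rename Nat.succ

/-- Lift a simultaneous substitution under a binder. -/
def liftSub (s : ℕ → Lam) : ℕ → Lam
  | 0 => var 0
  | n + 1 => (s n).shift

/-- Simultaneous (capture-avoiding) substitution. -/
def substAll (s : ℕ → Lam) : Lam → Lam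
  | var n => s n
  | app M N => app (M.substAll s) (N.substAll s)
  | lam M => lam (M.substAll (liftSub s))

/-- Capture-avoiding substitution `M[N/n]`; the variables above `n` are decremented. -/
def subst (M : Lam) (n : ℕ) (N : Lam) : Lam :=
  M.substAll (fun m => if m < n then var m else if m = n then N else var (m - 1))

/-- Number of (free) occurrences of the variable `n` in a term. -/
def countFree : Lam → ℕ → ℕ
  | var m, n => if m = n then 1 else 0
  | app M N, n => M.countFree n + N.countFree n
  | lam M, n => M.countFree (n + 1)

/-- A term is closed when it has no free variables. -/
def Closed (M : Lam) : Prop := ∀ n, M.countFree n = 0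

/-- A λ-term is linear if all of its free variables occur exactly once in it and
every abstraction binds a variable occurring exactly once in its (linear) body. -/
def Linear : Lam → Prop
  | var _ => True
  | app M N => M.Linear ∧ N.Linear ∧ ∀ n, M.countFree n = 0 ∨ N.countFree n = 0
  | lam M => M.Linear ∧ M.countFree 0 = 1

/-- The identity combinator `I = λx.x`. -/
def I : Lam := lam (var 0)

/-- The linear pairing `⟨M,N⟩ = λz. z M N`. -/
def pair (M N : Lam) : Lam := lam (app (app (var 0) M.shift) N.shift)

/-- The size (number of nodes of the syntax tree) of a term. -/
def size : Lam → ℕ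
  | var _ => 1
  | app M N => M.size + N.size + 1
  | lam M => M.size + 1

/-- One-step β-reduction, closed under arbitrary contexts. -/
inductive Beta : Lam → Lam → Prop
  | beta (M N : Lam) : Beta (app (lam M) N) (M.subst 0 N)
  | appL {M M'} (N : Lam) : Beta M M' → Beta (app M N) (app M' N)
  | appR (M : Lam) {N N'} : Beta N N' → Beta (app M N) (app M N')
  | lam {M M'} : Beta M M' → Beta (lam M) (lam M')

/-- One-step η-reduction `λx.Mx →η M` (x not free in M), closed under contexts. -/
inductive Eta : Lam → Lam → Prop
  | eta (M : Lam) : Eta (lam (app M.shift (var 0))) M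
  | appL {M M'} (N : Lam) : Eta M M' → Eta (app M N) (app M' N)
  | appR (M : Lam) {N N'} : Eta N N' → Eta (app M N) (app M N')
  | lam {M M'} : Eta M M' → Eta (lam M) (lam M')

/-- One-step βη-reduction. -/
def BetaEta (M N : Lam) : Prop := Beta M N ∨ Eta M N

/-- A value is a closed linear λ-term in β-normal form. -/
def IsValue (V : Lam) : Prop := V.Linear ∧ V.Closed ∧ ∀ W, ¬ Beta V W

end Lam

end LEMPaper

namespace LEMPaper

/-- Types of second-order intuitionistic multiplicative linear logic `IMLL₂`:
`A ::= α | A ⊸ B | ∀α.A` (type variables in de Bruijn representation). -/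
inductive Ty : Type
  | var : ℕ → Ty
  | arr : Ty → Ty → Ty
  | all : Ty → Ty
  deriving DecidableEq

namespace Ty

def liftRen (ρ : ℕ → ℕ) : ℕ → ℕ
  | 0 => 0
  | n + 1 => ρ n + 1

def rename (ρ : ℕ → ℕ) : Ty → Ty
  | var n => var (ρ n)
  | arr A B => arr (A.rename ρ) (B.rename ρ)
  | all A => all (A.rename (liftRen ρ))

/-- Shift all free type variables up by one. -/
def shift (A : Ty) : Ty := A.rename Nat.succ

def liftSub (s : ℕ → Ty) : ℕ → Ty
  | 0 => var 0
  | n + 1 => (s n).shift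

def substAll (s : ℕ → Ty) : Ty → Ty
  | var n => s n
  | arr A B => arr (A.substAll s) (B.substAll s)
  | all A => all (A.substAll (liftSub s))

/-- `A.instTop B` instantiates the outermost bound type variable of `A` with `B`
(i.e. `A⟨B/α⟩` where `α` is the variable bound by an enclosing `∀`). -/
def instTop (A B : Ty) : Ty :=
  A.substAll (fun n => match n with | 0 => B | m + 1 => var m)

/-- All free type variables are `< d`. -/
def ClosedAt : Ty → ℕ → Prop
  | var n, d => n < d
  | arr A B, d => A.ClosedAt d ∧ B.ClosedAt d
  | all A, d => A.ClosedAt (d + 1)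

/-- A type is closed when it has no free type variables. -/
def Closed (A : Ty) : Prop := A.ClosedAt 0

/-- `isPiSigma A true` means `A` is a `Π₁`-type, `isPiSigma A false` that `A` is a
`Σ₁`-type, following the mutual grammar
`Π₁ ::= α | Σ₁ ⊸ Π₁ | ∀α.Π₁` and `Σ₁ ::= α | Π₁ ⊸ Σ₁`. -/
def isPiSigma : Ty → Bool → Prop
  | var _, _ => True
  | arr A B, b => A.isPiSigma (!b) ∧ B.isPiSigma b
  | all A, b => b = true ∧ A.isPiSigma true

/-- A ground type is a closed `Π₁`-type. -/
def Ground (A : Ty) : Prop := A.isPiSigma true ∧ A.Closed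

/-- The unity type `1 = ∀α.(α ⊸ α)`. -/
def one : Ty := all (arr (var 0) (var 0))

/-- The tensor product `A ⊗ B = ∀α.(A ⊸ B ⊸ α) ⊸ α`. -/
def tensor (A B : Ty) : Ty :=
  all (arr (arr A.shift (arr B.shift (var 0))) (var 0))

end Ty

/-- Typing contexts for the linear λ-calculus: position `i` records the type of the
de Bruijn variable `i` (`none` meaning that the variable is not available). -/
abbrev Ctx := List (Option Ty)

/-- Splitting of a linear context into two disjoint parts. -/
inductive Split : Ctx → Ctx → Ctx → Prop
  | nil : Split [] [] []
  | left {Γ Γ₁ Γ₂ A} : Split Γ Γ₁ Γ₂ → Split (some A :: Γ) (some A :: Γ₁) (none :: Γ₂)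
  | right {Γ Γ₁ Γ₂ A} : Split Γ Γ₁ Γ₂ → Split (some A :: Γ) (none :: Γ₁) (some A :: Γ₂)
  | skip {Γ Γ₁ Γ₂} : Split Γ Γ₁ Γ₂ → Split (none :: Γ) (none :: Γ₁) (none :: Γ₂)

/-- The context contains exactly one (available) assumption, of type `A`, at `n`. -/
def OnlyAt (Γ : Ctx) (n : ℕ) (A : Ty) : Prop :=
  Γ[n]? = some (some A) ∧ ∀ m, m ≠ n → ∀ B, Γ[m]? ≠ some (some B)

/-- Type assignment of `IMLL₂` for the linear λ-calculus: variables are used exactly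
once (ax and the context splitting of the application rule enforce linearity),
plus the second-order rules for `∀` (with the usual eigenvariable condition,
rendered by shifting the context in `allI`). -/
inductive HasTy : Ctx → Lam → Ty → Prop
  | var {Γ n A} : OnlyAt Γ n A → HasTy Γ (.var n) A
  | lam {Γ M A B} : HasTy (some A :: Γ) M B → HasTy Γ (.lam M) (A.arr B)
  | app {Γ Γ₁ Γ₂ M N A B} : Split Γ Γ₁ Γ₂ →
      HasTy Γ₁ M (A.arr B) → HasTy Γ₂ N A → HasTy Γ (.app M N) B
  | allI {Γ M A} : HasTy (Γ.map (Option.map Ty.shift)) M A → HasTy Γ M (.all A)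
  | allE {Γ M A} (B : Ty) : HasTy Γ M (.all A) → HasTy Γ M (A.instTop B)

end LEMPaper
namespace LEMPaper

namespace Lam

theorem liftRen_comp (ρ ρ' : ℕ → ℕ) (n : ℕ) :
    liftRen ρ (liftRen ρ' n) = liftRen (fun m => ρ (ρ' m)) n := by
  cases n <;> rfl

theorem rename_rename (ρ ρ' : ℕ → ℕ) (M : Lam) :
    (M.rename ρ').rename ρ = M.rename (fun n => ρ (ρ' n)) := by
  induction M generalizing ρ ρ' with
  | var n => rfl
  | app M N ihM ihN => simp [rename, ihM, ihN]
  | lam M ih =>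
      simp only [rename, ih]
      exact congrArg (fun f => (rename f M).lam) (funext (liftRen_comp ρ ρ'))

theorem substAll_rename (s : ℕ → Lam) (ρ : ℕ → ℕ) (M : Lam) :
    (M.rename ρ).substAll s = M.substAll (fun n => s (ρ n)) := by
  induction M generalizing s ρ with
  | var n => rfl
  | app M N ihM ihN => simp [rename, substAll, ihM, ihN]
  | lam M ih =>
      simp only [rename, substAll, ih]
      refine congrArg (fun f => (substAll f M).lam) (funext fun n => ?_)
      cases n <;> rfl

theorem rename_substAll (ρ : ℕ → ℕ) (s : ℕ → Lam) (M : Lam) :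
    (M.substAll s).rename ρ = M.substAll (fun n => (s n).rename ρ) := by
  induction M generalizing s ρ with
  | var n => rfl
  | app M N ihM ihN => simp [rename, substAll, ihM, ihN]
  | lam M ih =>
      simp only [rename, substAll, ih]
      refine congrArg (fun f => (substAll f M).lam) (funext fun n => ?_)
      cases n with
      | zero => rfl
      | succ n =>
          show ((s n).rename Nat.succ).rename (liftRen ρ)
              = ((s n).rename ρ).rename Nat.succ
          rw [rename_rename, rename_rename]
          rfl

theorem substAll_substAll (s t : ℕ → Lam) (M : Lam) :
    (M.substAll t).substAll s = M.substAll (fun n => (t n).substAll s) := by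
  induction M generalizing s t with
  | var n => rfl
  | app M N ihM ihN => simp [substAll, ihM, ihN]
  | lam M ih =>
      simp only [substAll, ih]
      refine congrArg (fun f => (substAll f M).lam) (funext fun n => ?_)
      cases n with
      | zero => rfl
      | succ n =>
          show ((t n).rename Nat.succ).substAll (liftSub s)
              = ((t n).substAll s).rename Nat.succ
          rw [substAll_rename, rename_substAll]
          rfl

theorem substAll_id (M : Lam) : M.substAll var = M := by
  induction M with
  | var n => rfl
  | app M N ihM ihN => simp [substAll, ihM, ihN]
  | lam M ih =>
      simp only [substAll]
      congr 1
      have : liftSub var = var := by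
        funext n; cases n <;> rfl
      rw [this, ih]

/-- `scons a ρ` prepends `a` to the sequence `ρ`. -/
def scons {α : Sort*} (a : α) (ρ : ℕ → α) : ℕ → α
  | 0 => a
  | n + 1 => ρ n

theorem subst_substAll_lift (σ : ℕ → Lam) (U M : Lam) :
    (M.substAll (liftSub σ)).subst 0 U = M.substAll (scons U σ) := by
  rw [subst, substAll_substAll]
  congr 1
  funext n
  cases n with
  | zero => rfl
  | succ n =>
      show ((σ n).rename Nat.succ).substAll _ = σ n
      rw [substAll_rename]
      simp only [Nat.succ_eq_add_one]
      have : (fun m => if m + 1 < 0 then var (m+1) else if m + 1 = 0 then U else var (m + 1 - 1))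
          = var := by
        funext m; simp
      rw [this, substAll_id]

theorem substAll_eq_self (M : Lam) (s : ℕ → Lam)
    (h : ∀ n, M.countFree n ≠ 0 → s n = var n) : M.substAll s = M := by
  induction M generalizing s with
  | var n =>
      exact h n (by simp [countFree])
  | app M N ihM ihN =>
      simp only [substAll]
      rw [ihM s (fun n hn => h n (by simp [countFree]; omega)),
          ihN s (fun n hn => h n (by simp [countFree]; omega))]
  | lam M ih =>
      simp only [substAll]
      rw [ih (liftSub s) ?_]
      intro n hn
      cases n with
      | zero => rfl
      | succ n =>
          show (s n).rename Nat.succ = var (n+1)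
          rw [h n hn]
          rfl

theorem substAll_closed (M : Lam) (h : M.Closed) (s : ℕ → Lam) : M.substAll s = M :=
  substAll_eq_self M s (fun n hn => absurd (h n) hn)

theorem subst_closed (M : Lam) (h : M.Closed) (n : ℕ) (U : Lam) : M.subst n U = M :=
  substAll_eq_self M _ (fun m hm => by rw [h m] at hm; exact absurd rfl hm)

theorem substAll_closed' (M : Lam) (h : M.Closed) (s : ℕ → Lam) : M.substAll s = M :=
  substAll_closed M h s

end Lam

end LEMPaper
namespace LEMPaper

namespace Ty

theorem liftRen_comp (ρ ρ' : ℕ → ℕ) (n : ℕ) :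
    liftRen ρ (liftRen ρ' n) = liftRen (fun m => ρ (ρ' m)) n := by
  cases n <;> rfl

theorem rename_rename (ρ ρ' : ℕ → ℕ) (A : Ty) :
    (A.rename ρ').rename ρ = A.rename (fun n => ρ (ρ' n)) := by
  induction A generalizing ρ ρ' with
  | var n => rfl
  | arr A B ihA ihB => simp [rename, ihA, ihB]
  | all A ih =>
      simp only [rename, ih]
      exact congrArg (fun f => (rename f A).all) (funext (liftRen_comp ρ ρ'))

theorem substAll_rename (s : ℕ → Ty) (ρ : ℕ → ℕ) (A : Ty) :
    (A.rename ρ).substAll s = A.substAll (fun n => s (ρ n)) := by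
  induction A generalizing s ρ with
  | var n => rfl
  | arr A B ihA ihB => simp [rename, substAll, ihA, ihB]
  | all A ih =>
      simp only [rename, substAll, ih]
      refine congrArg (fun f => (substAll f A).all) (funext fun n => ?_)
      cases n <;> rfl

theorem rename_substAll (ρ : ℕ → ℕ) (s : ℕ → Ty) (A : Ty) :
    (A.substAll s).rename ρ = A.substAll (fun n => (s n).rename ρ) := by
  induction A generalizing s ρ with
  | var n => rfl
  | arr A B ihA ihB => simp [rename, substAll, ihA, ihB]
  | all A ih =>
      simp only [rename, substAll, ih]
      refine congrArg (fun f => (substAll f A).all) (funext fun n => ?_)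
      cases n with
      | zero => rfl
      | succ n =>
          show ((s n).rename Nat.succ).rename (liftRen ρ)
              = ((s n).rename ρ).rename Nat.succ
          rw [rename_rename, rename_rename]
          rfl

theorem substAll_substAll (s t : ℕ → Ty) (A : Ty) :
    (A.substAll t).substAll s = A.substAll (fun n => (t n).substAll s) := by
  induction A generalizing s t with
  | var n => rfl
  | arr A B ihA ihB => simp [substAll, ihA, ihB]
  | all A ih =>
      simp only [substAll, ih]
      refine congrArg (fun f => (substAll f A).all) (funext fun n => ?_)
      cases n with
      | zero => rfl
      | succ n =>
          show ((t n).rename Nat.succ).substAll (liftSub s)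
              = ((t n).substAll s).rename Nat.succ
          rw [substAll_rename, rename_substAll]
          rfl

theorem substAll_closedAt (A : Ty) : ∀ (d : ℕ) (s : ℕ → Ty), A.ClosedAt d →
    (∀ n, n < d → s n = var n) → A.substAll s = A := by
  induction A with
  | var n => intro d s h hs; exact hs n h
  | arr A B ihA ihB =>
      intro d s h hs
      simp only [substAll]
      rw [ihA d s h.1 hs, ihB d s h.2 hs]
  | all A ih =>
      intro d s h hs
      simp only [substAll]
      rw [ih (d+1) (liftSub s) h ?_]
      intro n hn
      cases n with
      | zero => rfl
      | succ n =>
          show (s n).shift = var (n+1)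
          rw [hs n (by omega)]
          rfl

theorem substAll_closed (A : Ty) (h : A.Closed) (s : ℕ → Ty) : A.substAll s = A :=
  substAll_closedAt A 0 s h (by omega)

@[simp] theorem one_shift : Ty.one.shift = Ty.one := rfl

@[simp] theorem one_substAll (s : ℕ → Ty) : Ty.one.substAll s = Ty.one := rfl

end Ty

/-- The substitution sending every type variable to `1`. -/
def oSub : ℕ → Ty := fun _ => Ty.one

/-- `close A` reads every free type variable of `A` as `1`. -/
def close (A : Ty) : Ty := A.substAll oSub

mutual
/-- The eraser term `E_A` for a `Π₁`-type, mutually with the dummy value for a `Σ₁`-type. -/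
def eraser : Ty → Lam
  | .var _ => .I
  | .arr A B => .lam (.app (eraser B) (.app (.var 0) (dummy A)))
  | .all A => .lam (.app (eraser A) (.var 0))

/-- The dummy inhabitant of (the `1`-collapse of) a `Σ₁`-type. -/
def dummy : Ty → Lam
  | .var _ => .I
  | .arr A B => .lam (.app (.app (eraser A) (.var 0)) (dummy B))
  | .all _ => .I
end

theorem eraser_dummy_closed_linear (A : Ty) :
    (eraser A).Closed ∧ (eraser A).Linear ∧ (dummy A).Closed ∧ (dummy A).Linear := by
  induction A with
  | var n =>
      refine ⟨fun n => rfl, ⟨trivial, rfl⟩, fun n => rfl, ⟨trivial, rfl⟩⟩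
  | arr A B ihA ihB =>
      obtain ⟨hAc, hAl, hAdc, hAdl⟩ := ihA
      obtain ⟨hBc, hBl, hBdc, hBdl⟩ := ihB
      refine ⟨?_, ?_, ?_, ?_⟩
      · intro n
        simp [eraser, Lam.countFree, hBc (n+1), hAdc (n+1)]
      · refine ⟨⟨hBl, ⟨trivial, hAdl, fun n => .inr (hAdc n)⟩, fun n => .inl (hBc n)⟩, ?_⟩
        simp [Lam.countFree, hBc 0, hAdc 0]
      · intro n
        simp [dummy, Lam.countFree, hAc (n+1), hBdc (n+1)]
      · refine ⟨⟨⟨hAl, trivial, fun n => .inl (hAc n)⟩, hBdl, fun n => .inr (hBdc n)⟩, ?_⟩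
        simp [Lam.countFree, hAc 0, hBdc 0]
  | all A ih =>
      obtain ⟨hAc, hAl, _, _⟩ := ih
      refine ⟨?_, ?_, fun n => rfl, ⟨trivial, rfl⟩⟩
      · intro n
        simp [eraser, Lam.countFree, hAc (n+1)]
      · refine ⟨⟨hAl, trivial, fun n => .inl (hAc n)⟩, ?_⟩
        simp [Lam.countFree, hAc 0]

end LEMPaper
namespace LEMPaper

theorem Split.append_none {Γ Γ₁ Γ₂ : Ctx} (h : Split Γ Γ₁ Γ₂) :
    Split (Γ ++ [none]) (Γ₁ ++ [none]) (Γ₂ ++ [none]) := by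
  induction h with
  | nil => exact .skip .nil
  | left _ ih => exact .left ih
  | right _ ih => exact .right ih
  | skip _ ih => exact .skip ih

theorem OnlyAt.append_none {Γ : Ctx} {n A} (h : OnlyAt Γ n A) :
    OnlyAt (Γ ++ [none]) n A := by
  obtain ⟨h1, h2⟩ := h
  have hn : n < Γ.length := by
    by_contra hc
    rw [List.getElem?_eq_none (by omega)] at h1
    exact nomatch h1
  constructor
  · rw [List.getElem?_append_left hn]; exact h1
  · intro m hm B
    rcases lt_or_ge m Γ.length with hlt | hge
    · rw [List.getElem?_append_left hlt]; exact h2 m hm B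
    · rw [List.getElem?_append_right hge]
      rcases Nat.lt_or_ge (m - Γ.length) 1 with h' | h'
      · interval_cases h : (m - Γ.length)
        · simp
      · rw [List.getElem?_eq_none (by simpa using h')]
        simp

theorem HasTy.weaken_none {Γ M A} (h : HasTy Γ M A) : HasTy (Γ ++ [none]) M A := by
  induction h with
  | var h => exact .var h.append_none
  | lam _ ih => exact .lam ih
  | app hs _ _ ih1 ih2 => exact .app hs.append_none ih1 ih2
  | allI _ ih =>
      refine .allI ?_
      simpa using ih
  | allE B _ ih => exact .allE B ih

theorem hasTy_I_one : HasTy [] Lam.I Ty.one := by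
  refine .allI (.lam (.var ?_))
  exact ⟨rfl, by intro m hm B; cases m; · exact absurd rfl hm
                 · rename_i m; cases m <;> simp⟩

theorem onlyAt_single (A : Ty) : OnlyAt [some A] 0 A := by
  refine ⟨rfl, ?_⟩
  intro m hm B
  cases m
  · exact absurd rfl hm
  · rename_i m; cases m <;> simp

/-- Key computation: instantiating the lifted `1`-substitution with `1`. -/
theorem instTop_liftSub_oSub (A : Ty) :
    (A.substAll (Ty.liftSub oSub)).instTop Ty.one = close A := by
  rw [Ty.instTop, Ty.substAll_substAll]
  refine congrArg A.substAll (funext fun n => ?_)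
  cases n with
  | zero => rfl
  | succ n =>
      show (Ty.one.shift).substAll _ = Ty.one
      rw [Ty.one_shift, Ty.one_substAll]

theorem hasTy_eraser_dummy (A : Ty) :
    (A.isPiSigma true → HasTy [] (eraser A) ((close A).arr Ty.one)) ∧
    (A.isPiSigma false → HasTy [] (dummy A) (close A)) := by
  induction A with
  | var n =>
      constructor
      · intro _
        exact .lam (.var (onlyAt_single _))
      · intro _
        exact hasTy_I_one
  | arr A B ihA ihB =>
      constructor
      · rintro ⟨hA, hB⟩
        -- eraser (arr A B) = λx. (eraser B) (x (dummy A))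
        refine .lam (.app (.right .nil) ((ihB.1 hB).weaken_none) ?_)
        refine .app (.left .nil) (.var (onlyAt_single _)) ((ihA.2 hA).weaken_none)
      · rintro ⟨hA, hB⟩
        -- dummy (arr A B) = λx. ((eraser A) x) (dummy B)
        refine .lam (.app (.left .nil) ?_ ((ihB.2 hB).weaken_none))
        have h1 : HasTy [some (close A)] (.app (eraser A) (.var 0)) Ty.one :=
          .app (.right .nil) ((ihA.1 hA).weaken_none) (.var (onlyAt_single _))
        exact .allE (close B) h1
  | all A ih =>
      constructor
      · rintro ⟨-, hA⟩
        -- eraser (all A) = λx. (eraser A) x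
        refine .lam (.app (.right .nil) ((ih.1 hA).weaken_none) ?_)
        have h0 : HasTy [some (close (.all A))] (.var 0) (close (.all A)) :=
          .var (onlyAt_single _)
        have h1 : HasTy [some (close (.all A))] (.var 0)
            ((A.substAll (Ty.liftSub oSub)).instTop Ty.one) := .allE Ty.one h0
        rwa [instTop_liftSub_oSub] at h1
      · rintro ⟨h, -⟩
        exact absurd h (by simp)

end LEMPaper
namespace LEMPaper

open Lam (scons)

/-- Reducibility candidates: predicates closed under βη-expansion. -/
def Cand (P : Lam → Prop) : Prop :=
  ∀ T T', Lam.BetaEta T T' → P T' → P T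

/-- The interpretation of a type as a predicate on (untyped) λ-terms,
given an interpretation of its free type variables. -/
def interp : Ty → (ℕ → Lam → Prop) → Lam → Prop
  | .var n, ρ => ρ n
  | .arr A B, ρ => fun T => ∀ U, interp A ρ U → interp B ρ (T.app U)
  | .all A, ρ => fun T => ∀ C, Cand C → interp A (scons C ρ) T

theorem interp_ext {A : Ty} {ρ₁ ρ₂ : ℕ → Lam → Prop} (h : ∀ n, ρ₁ n = ρ₂ n) :
    interp A ρ₁ = interp A ρ₂ := by
  rw [funext h]

theorem interp_rename (A : Ty) (r : ℕ → ℕ) (ρ : ℕ → Lam → Prop) :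
    interp (A.rename r) ρ = interp A (fun n => ρ (r n)) := by
  induction A generalizing r ρ with
  | var n => rfl
  | arr A B ihA ihB =>
      funext T
      simp only [Ty.rename, interp, ihA, ihB]
  | all A ih =>
      funext T
      simp only [Ty.rename, interp, ih]
      have key : ∀ C : Lam → Prop, (fun n => scons C ρ (Ty.liftRen r n))
          = scons C (fun n => ρ (r n)) := by
        intro C; funext n; cases n <;> rfl
      simp only [key]

theorem interp_substAll (A : Ty) (s : ℕ → Ty) (ρ : ℕ → Lam → Prop) :
    interp (A.substAll s) ρ = interp A (fun n => interp (s n) ρ) := by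
  induction A generalizing s ρ with
  | var n => rfl
  | arr A B ihA ihB =>
      funext T
      simp only [Ty.substAll, interp, ihA, ihB]
  | all A ih =>
      funext T
      simp only [Ty.substAll, interp, ih]
      have key : ∀ C : Lam → Prop, (fun n => interp (Ty.liftSub s n) (scons C ρ))
          = scons C (fun n => interp (s n) ρ) := by
        intro C
        funext n
        cases n with
        | zero => rfl
        | succ n =>
            show interp ((s n).rename Nat.succ) (scons C ρ) = interp (s n) ρ
            rw [interp_rename]
            exact interp_ext fun n => rfl
      simp only [key]

theorem interp_instTop (A B : Ty) (ρ : ℕ → Lam → Prop) :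
    interp (A.instTop B) ρ = interp A (scons (interp B ρ) ρ) := by
  rw [Ty.instTop, interp_substAll]
  refine interp_ext fun n => ?_
  cases n <;> rfl

theorem cand_interp {A : Ty} {ρ : ℕ → Lam → Prop} (h : ∀ n, Cand (ρ n)) :
    Cand (interp A ρ) := by
  induction A generalizing ρ with
  | var n => exact h n
  | arr A B ihA ihB =>
      intro T T' hTT' hT' U hU
      exact ihB h _ _ (hTT'.imp (.appL U) (.appL U)) (hT' U hU)
  | all A ih =>
      intro T T' hTT' hT' C hC
      refine ih (fun n => ?_) _ _ hTT' (hT' C hC)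
      cases n with
      | zero => exact hC
      | succ n => exact h n

theorem cand_star {P : Lam → Prop} (hP : Cand P) {T T' : Lam}
    (h : Relation.ReflTransGen Lam.BetaEta T T') : P T' → P T := by
  induction h with
  | refl => exact id
  | tail _ hstep ih => exact fun h' => ih (hP _ _ hstep h')

theorem split_get₁ {Γ Γ₁ Γ₂ : Ctx} (h : Split Γ Γ₁ Γ₂) :
    ∀ (n : ℕ) (B : Ty), Γ₁[n]? = some (some B) → Γ[n]? = some (some B) := by
  induction h with
  | nil => intro n B h; simp at h
  | left _ ih =>
      rintro (_ | n) B h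
      · simpa using h
      · simpa using ih n B (by simpa using h)
  | right _ ih =>
      rintro (_ | n) B h
      · simp at h
      · simpa using ih n B (by simpa using h)
  | skip _ ih =>
      rintro (_ | n) B h
      · simp at h
      · simpa using ih n B (by simpa using h)

theorem split_get₂ {Γ Γ₁ Γ₂ : Ctx} (h : Split Γ Γ₁ Γ₂) :
    ∀ (n : ℕ) (B : Ty), Γ₂[n]? = some (some B) → Γ[n]? = some (some B) := by
  induction h with
  | nil => intro n B h; simp at h
  | left _ ih =>
      rintro (_ | n) B h
      · simp at h
      · simpa using ih n B (by simpa using h)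
  | right _ ih =>
      rintro (_ | n) B h
      · simpa using h
      · simpa using ih n B (by simpa using h)
  | skip _ ih =>
      rintro (_ | n) B h
      · simp at h
      · simpa using ih n B (by simpa using h)

/-- Fundamental lemma of the logical relation. -/
theorem fundamental {Γ M A} (h : HasTy Γ M A) :
    ∀ (ρ : ℕ → Lam → Prop), (∀ n, Cand (ρ n)) →
    ∀ (σ : ℕ → Lam), (∀ n B, Γ[n]? = some (some B) → interp B ρ (σ n)) →
      interp A ρ (M.substAll σ) := by
  induction h with
  | var h =>
      intro ρ hρ σ hσ
      exact hσ _ _ h.1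
  | @lam Γ M A B _ ih =>
      intro ρ hρ σ hσ
      intro U hU
      refine cand_interp hρ _ _ (Or.inl (.beta _ U)) ?_
      rw [Lam.subst_substAll_lift]
      refine ih ρ hρ (scons U σ) ?_
      intro n B' hn
      cases n with
      | zero =>
          simp only [List.getElem?_cons_zero] at hn
          cases hn; exact hU
      | succ n => exact hσ n B' (by simpa using hn)
  | app hs _ _ ih1 ih2 =>
      intro ρ hρ σ hσ
      exact ih1 ρ hρ σ (fun n B h => hσ n B (split_get₁ hs n B h)) _
        (ih2 ρ hρ σ (fun n B h => hσ n B (split_get₂ hs n B h)))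
  | @allI Γ M A _ ih =>
      intro ρ hρ σ hσ
      intro C hC
      refine ih (scons C ρ) (fun n => by cases n with
        | zero => exact hC
        | succ n => exact hρ n) σ ?_
      intro n B hn
      rw [List.getElem?_map] at hn
      rcases hΓ : Γ[n]? with - | o
      · rw [hΓ] at hn; simp at hn
      · rw [hΓ] at hn
        cases o with
        | none => simp [Option.map] at hn
        | some B₀ =>
            simp only [Option.map] at hn
            cases hn
            show interp (B₀.rename Nat.succ) (scons C ρ) (σ n)
            rw [interp_rename]
            exact hσ n B₀ hΓ
  | @allE Γ M A B _ ih =>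
      intro ρ hρ σ hσ
      rw [interp_instTop]
      exact ih ρ hρ σ hσ (interp B ρ) (cand_interp hρ)

end LEMPaper
namespace LEMPaper

/-- The base candidate: terms βη-reducing to `I`. -/
def P0 : Lam → Prop := fun T => Relation.ReflTransGen Lam.BetaEta T Lam.I

theorem cand_P0 : Cand P0 := fun _ _ h h' => Relation.ReflTransGen.head h h'

/-- The environment interpreting every type variable as `P0`. -/
def rho0 : ℕ → Lam → Prop := fun _ => P0

theorem cand_rho0 : ∀ n, Cand (rho0 n) := fun _ => cand_P0

theorem rtg_appL {T T' : Lam} (U : Lam)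
    (h : Relation.ReflTransGen Lam.BetaEta T T') :
    Relation.ReflTransGen Lam.BetaEta (T.app U) (T'.app U) :=
  Relation.ReflTransGen.lift (fun X : Lam => X.app U)
    (fun (_ _ : Lam) (hs : Lam.BetaEta _ _) => hs.imp (.appL U) (.appL U)) _ _ h

@[simp] theorem subst0_var0 (T : Lam) : (Lam.var 0).subst 0 T = T := by
  simp [Lam.subst, Lam.substAll]

theorem main_red (A : Ty) :
    (A.isPiSigma true → ∀ T, interp A rho0 T → P0 (Lam.app (eraser A) T)) ∧
    (A.isPiSigma false → interp A rho0 (dummy A)) := by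
  induction A with
  | var n =>
      constructor
      · intro _ T hT
        refine Relation.ReflTransGen.head (Or.inl ?_) hT
        have h := Lam.Beta.beta (.var 0) T
        rwa [subst0_var0] at h
      · intro _
        exact Relation.ReflTransGen.refl
  | arr A B ihA ihB =>
      constructor
      · rintro ⟨hA, hB⟩ T hT
        simp only [Bool.not_true] at hA
        have h2 : P0 (Lam.app (eraser B) (T.app (dummy A))) :=
          ihB.1 hB _ (hT _ (ihA.2 hA))
        refine Relation.ReflTransGen.head (Or.inl ?_) h2
        have h := Lam.Beta.beta (Lam.app (eraser B) (Lam.app (.var 0) (dummy A))) T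
        have e : (Lam.app (eraser B) (Lam.app (.var 0) (dummy A))).subst 0 T
            = Lam.app (eraser B) (Lam.app T (dummy A)) := by
          show Lam.app ((eraser B).subst 0 T)
              (Lam.app ((Lam.var 0).subst 0 T) ((dummy A).subst 0 T)) = _
          rw [Lam.subst_closed _ (eraser_dummy_closed_linear B).1,
              Lam.subst_closed _ (eraser_dummy_closed_linear A).2.2.1, subst0_var0]
        rwa [e] at h
      · rintro ⟨hA, hB⟩
        simp only [Bool.not_false] at hA
        intro U hU
        have hUI : P0 (Lam.app (eraser A) U) := ihA.1 hA U hU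
        have r1 : Lam.BetaEta (Lam.app (dummy (A.arr B)) U)
            (Lam.app (Lam.app (eraser A) U) (dummy B)) := by
          refine Or.inl ?_
          have h := Lam.Beta.beta (Lam.app (Lam.app (eraser A) (.var 0)) (dummy B)) U
          have e : (Lam.app (Lam.app (eraser A) (.var 0)) (dummy B)).subst 0 U
              = Lam.app (Lam.app (eraser A) U) (dummy B) := by
            show Lam.app (Lam.app ((eraser A).subst 0 U) ((Lam.var 0).subst 0 U))
                ((dummy B).subst 0 U) = _
            rw [Lam.subst_closed _ (eraser_dummy_closed_linear A).1,
                Lam.subst_closed _ (eraser_dummy_closed_linear B).2.2.1, subst0_var0]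
          rwa [e] at h
        have r3 : Lam.BetaEta (Lam.app Lam.I (dummy B)) (dummy B) := by
          refine Or.inl ?_
          have h := Lam.Beta.beta (.var 0) (dummy B)
          rwa [subst0_var0] at h
        have chain : Relation.ReflTransGen Lam.BetaEta (Lam.app (dummy (A.arr B)) U)
            (dummy B) :=
          Relation.ReflTransGen.head r1
            ((rtg_appL (dummy B) hUI).trans (Relation.ReflTransGen.head r3 .refl))
        exact cand_star (cand_interp cand_rho0) chain (ihB.2 hB)
  | all A ih =>
      constructor
      · rintro ⟨-, hA⟩ T hT
        have h1 : interp A (Lam.scons P0 rho0) T := hT P0 cand_P0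
        have e : Lam.scons P0 rho0 = rho0 := funext fun n => by cases n <;> rfl
        rw [e] at h1
        have h2 : P0 (Lam.app (eraser A) T) := ih.1 hA T h1
        refine Relation.ReflTransGen.head (Or.inl ?_) h2
        have h := Lam.Beta.beta (Lam.app (eraser A) (.var 0)) T
        have e2 : (Lam.app (eraser A) (.var 0)).subst 0 T = Lam.app (eraser A) T := by
          show Lam.app ((eraser A).subst 0 T) ((Lam.var 0).subst 0 T) = _
          rw [Lam.subst_closed _ (eraser_dummy_closed_linear A).1, subst0_var0]
        rwa [e2] at h
      · rintro ⟨h, -⟩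
        exact absurd h (by simp)

end LEMPaper

namespace LEMPaper

/-- Theorem 2.1: every ground type `A` of `IMLL₂` is erasable:
there is a linear λ-term `E_A` of type `A ⊸ 1` such that `E_A V →βη* I` for
every value `V` (closed, β-normal, linear λ-term) of type `A`. -/
theorem ground_type_erasable (A : Ty) (hA : Ty.Ground A) :
    ∃ E : Lam, E.Linear ∧ HasTy [] E (A.arr Ty.one) ∧
      ∀ V : Lam, Lam.IsValue V → HasTy [] V A →
        Relation.ReflTransGen Lam.BetaEta (Lam.app E V) Lam.I := by
  obtain ⟨hPi, hClosed⟩ := hA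
  refine ⟨eraser A, (eraser_dummy_closed_linear A).2.1, ?_, ?_⟩
  · have h := (hasTy_eraser_dummy A).1 hPi
    rwa [close, Ty.substAll_closed A hClosed] at h
  · intro V _ hV
    have hint : interp A rho0 V := by
      have h := fundamental hV rho0 cand_rho0 Lam.var (by intro n B h; simp at h)
      rwa [Lam.substAll_id] at h
    exact (main_red A).1 hPi V hint

end LEMPaper
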